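/- Necessary Condition 1: Let P be a finite set of points in the plane in general position. If P admits a 4-connected triangulation, then |P'| >= |CH(P)|, where P' is the set of points of P interior to CH(P) and |CH(P)| is the number of vertices of CH(P). -/

import Mathlib

open scoped Classical

noncomputable section

/-- Points of the plane. -/
abbrev Pt : Type := ℝ × ℝ

/-- Orientation determinant of two plane vectors. -/
def det2 (u v : Pt) : ℝ := u.1 * v.2 - u.2 * v.1

/-- `P` is in general position: no three distinct points of `P` are collinear. -/
def GenPos (P : Finset Pt) : Prop :=
  ∀ p ∈ P, ∀ q ∈ P, ∀ r ∈ P, p ≠ q → p ≠ r → q ≠ r → ¬Collinear ℝ ({p, q, r} : Set Pt)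

/-- The vertices of the convex hull of `P` (the extreme points of `P`). -/
def hullVx (P : Finset Pt) : Finset Pt :=
  P.filter fun p => p ∉ convexHull ℝ ((P.erase p : Finset Pt) : Set Pt)

/-- The points of `P` lying in the interior of the convex hull of `P`. -/
def intPts (P : Finset Pt) : Finset Pt :=
  P.filter fun p => p ∈ interior (convexHull ℝ (P : Set Pt))

/-- `p` and `q` are consecutive vertices of the convex hull of `P`
(the segment joining them is an edge of the hull boundary). -/
def HullEdge (P : Finset Pt) (p q : Pt) : Prop :=
  p ∈ hullVx P ∧ q ∈ hullVx P ∧ p ≠ q ∧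
    segment ℝ p q ⊆ frontier (convexHull ℝ (P : Set Pt))

/-- A plane graph with vertex set `P`, all of whose edges are straight line
segments: edges may only meet at common endpoints. -/
structure PlaneGraph (P : Finset Pt) where
  Adj : Pt → Pt → Prop
  symm : ∀ {p q}, Adj p q → Adj q p
  mem_left : ∀ {p q}, Adj p q → p ∈ P
  ne : ∀ {p q}, Adj p q → p ≠ q
  noncross : ∀ {p q r s}, Adj p q → Adj r s →
    (openSegment ℝ p q ∩ openSegment ℝ r s).Nonempty → ({p, q} : Set Pt) = {r, s}

/-- A triangulation of `P`: a plane straight-line graph on `P` that is maximal,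
i.e. no further segment between points of `P` can be added without crossing an
existing edge.  (For a finite point set in general position this is equivalent
to: the outer face is the complement of the convex hull and every bounded face
is a triangle.) -/
structure Triangulation (P : Finset Pt) extends PlaneGraph P where
  maximal : ∀ p ∈ P, ∀ q ∈ P, p ≠ q → ¬Adj p q →
    ∃ r s, Adj r s ∧ ({p, q} : Set Pt) ≠ {r, s} ∧
      (openSegment ℝ p q ∩ openSegment ℝ r s).Nonempty

/-- The abstract graph underlying a plane graph. -/
def PlaneGraph.graph {P : Finset Pt} (G : PlaneGraph P) : SimpleGraph {x // x ∈ P} where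
  Adj p q := G.Adj p q
  symm := ⟨fun _ _ h => G.symm h⟩
  loopless := ⟨fun _ h => G.ne h rfl⟩

/-- A graph is `k`-connected if it has at least `k+1` vertices and no set of at
most `k-1` vertices disconnects it (removing fewer than `k` vertices leaves a
connected graph). -/
def KConnected {V : Type*} [Fintype V] (G : SimpleGraph V) (k : ℕ) : Prop :=
  k + 1 ≤ Fintype.card V ∧
    ∀ S : Finset V, S.card < k → (G.induce ((↑S : Set V)ᶜ)).Connected

/-- A chord of a plane graph on `P`: an edge joining two nonconsecutive
vertices of the convex hull of `P`. -/
def IsChord {P : Finset Pt} (G : PlaneGraph P) (p q : Pt) : Prop :=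
  G.Adj p q ∧ p ∈ hullVx P ∧ q ∈ hullVx P ∧ ¬HullEdge P p q

/-- Three points forming a triangle of the graph `G` (pairwise adjacent). -/
def IsTriangleOf {P : Finset Pt} (G : PlaneGraph P) (p q r : Pt) : Prop :=
  G.Adj p q ∧ G.Adj q r ∧ G.Adj p r

/-- A complex triangle of `G`: a triangle formed by three edges of `G` that
contains a point of `P` in its interior and another point of `P` in its
exterior. -/
def IsComplexTri {P : Finset Pt} (G : PlaneGraph P) (p q r : Pt) : Prop :=
  IsTriangleOf G p q r ∧
    (∃ x ∈ P, x ∈ interior (convexHull ℝ ({p, q, r} : Set Pt))) ∧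
    (∃ y ∈ P, y ∉ convexHull ℝ ({p, q, r} : Set Pt))

/-- A triangulation is noncomplex if it has neither chords nor complex
triangles. -/
def Noncomplex {P : Finset Pt} (T : Triangulation P) : Prop :=
  (∀ p q, ¬IsChord T.toPlaneGraph p q) ∧ ∀ p q r, ¬IsComplexTri T.toPlaneGraph p q r

/-- `Q` is anomalous: its convex hull is a triangle and there is a hull vertex
`p` such that every point of `Q \ {p}` lies on the boundary of the convex hull
of `Q \ {p}`. -/
def Anomalous (Q : Finset Pt) : Prop :=
  (hullVx Q).card = 3 ∧
    ∃ p ∈ hullVx Q, ∀ q ∈ Q.erase p,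
      q ∉ interior (convexHull ℝ ((Q.erase p : Finset Pt) : Set Pt))

/-- `s` is a vertex of the convex hull of `P` lying strictly between `pr` and
`pt` in counterclockwise order (i.e. on the open counterclockwise hull arc
from `pr` to `pt`; for a hull traversed counterclockwise these are exactly the
hull vertices strictly on the right of the directed chord `pr → pt`). -/
def CCWBetween (P : Finset Pt) (pr pt s : Pt) : Prop :=
  s ∈ hullVx P ∧ det2 (pt - pr) (s - pr) < 0

/-- The set `S` of hull vertices strictly between `pr` and `pt`
counterclockwise. -/
def cutSet (P : Finset Pt) (pr pt : Pt) : Finset Pt :=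
  P.filter fun s => CCWBetween P pr pt s

/-- An inward triangle of a plane graph `G` on `P`: a triangle of `G` two of
whose vertices `b`, `c` are consecutive hull vertices and whose third vertex
`a` (its inward vertex) is an interior point of the hull. -/
def InwardTri {P : Finset Pt} (G : PlaneGraph P) (b c a : Pt) : Prop :=
  IsTriangleOf G b c a ∧ HullEdge P b c ∧ a ∈ intPts P

/-- A (geometric) inward triangle of the point set `P`: its base `b c` is an
edge of the hull and its inward vertex `a` is an interior point. -/
def GInwardTri (P : Finset Pt) (b c a : Pt) : Prop :=
  HullEdge P b c ∧ a ∈ intPts P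

/-- The triangle `b c a` contains no point of `P` in its interior. -/
def EmptyTri (P : Finset Pt) (b c a : Pt) : Prop :=
  ∀ x ∈ P, x ∉ interior (convexHull ℝ ({b, c, a} : Set Pt))

/-- The inward triangle `b c a` is forbidden: for some hull vertices `pr ≠ pt`,
its base edge lies on the clockwise hull chain from `pr` to `pt` (i.e. `b`, `c`
are not strictly counterclockwise between `pr` and `pt`) while its inward
vertex lies on the boundary of the convex hull of `Q = P \ S`. -/
def ForbiddenTri (P : Finset Pt) (b c a : Pt) : Prop :=
  ∃ pr ∈ hullVx P, ∃ pt ∈ hullVx P, pr ≠ pt ∧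
    b ∉ cutSet P pr pt ∧ c ∉ cutSet P pr pt ∧
    a ∉ interior (convexHull ℝ ((P \ cutSet P pr pt : Finset Pt) : Set Pt))

/-- A triangle, recorded as `(b, c, a)` with base `b c` and inward vertex `a`. -/
abbrev Tri : Type := Pt × Pt × Pt

def triVerts (t : Tri) : Set Pt := {t.1, t.2.1, t.2.2}

def triInterior (t : Tri) : Set Pt := interior (convexHull ℝ (triVerts t))

/-- A non-forbidden empty inward triangle of `P`. -/
def GoodTri (P : Finset Pt) (t : Tri) : Prop :=
  GInwardTri P t.1 t.2.1 t.2.2 ∧ EmptyTri P t.1 t.2.1 t.2.2 ∧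
    ¬ForbiddenTri P t.1 t.2.1 t.2.2

/-- Two triangles share an edge (i.e. share two distinct vertices). -/
def ShareEdge (t₁ t₂ : Tri) : Prop :=
  ∃ u v : Pt, u ≠ v ∧ u ∈ triVerts t₁ ∧ v ∈ triVerts t₁ ∧
    u ∈ triVerts t₂ ∧ v ∈ triVerts t₂

/-- A compatible set of triangles: all its members are non-forbidden empty
inward triangles, and no two (distinct) members share an edge, an inward
vertex, or an interior point. -/
def Compatible (P : Finset Pt) (Tc : Finset Tri) : Prop :=
  (∀ t ∈ Tc, GoodTri P t) ∧
    ∀ t₁ ∈ Tc, ∀ t₂ ∈ Tc, triVerts t₁ ≠ triVerts t₂ →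
      ¬ShareEdge t₁ t₂ ∧ t₁.2.2 ≠ t₂.2.2 ∧ triInterior t₁ ∩ triInterior t₂ = ∅

/-- A maximal compatible set: no inward triangle can be added while keeping it
compatible. -/
def MaxCompatible (P : Finset Pt) (Tc : Finset Tri) : Prop :=
  Compatible P Tc ∧
    ∀ t : Tri, Compatible P (insert t Tc) → ∃ t' ∈ Tc, triVerts t' = triVerts t

/-- The number of triangles of `Tc` whose inward vertex is a vertex of the
convex hull of `P'` (counted up to the underlying vertex set). -/
def tcPrimeCard (P : Finset Pt) (Tc : Finset Tri) : ℕ :=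
  ((Tc.filter fun t => t.2.2 ∈ hullVx (intPts P)).image triVerts).card

/-- `max|T_c'|`: the maximum, over all maximal compatible sets `T_c`, of the
number of triangles of `T_c` whose inward vertex is a hull vertex of `P'`. -/
noncomputable def maxTcPrime (P : Finset Pt) : ℕ :=
  sSup {m | ∃ Tc : Finset Tri, MaxCompatible P Tc ∧ m = tcPrimeCard P Tc}

/-! ### Auxiliary development -/

section Aux

/- basic det2 algebra -/
lemma det2_affine₁ (p q r w : Pt) (t : ℝ) :
    det2 (p + t • (q - p) - r) w = (1-t) * det2 (p - r) w + t * det2 (q - r) w := by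
  simp only [det2, Prod.fst_add, Prod.fst_sub, Prod.snd_add, Prod.snd_sub,
    Prod.smul_fst, Prod.smul_snd, smul_eq_mul]
  ring

lemma det2_affine₂ (p q r w : Pt) (t : ℝ) :
    det2 w (p + t • (q - p) - r) = (1-t) * det2 w (p - r) + t * det2 w (q - r) := by
  simp only [det2, Prod.fst_add, Prod.fst_sub, Prod.snd_add, Prod.snd_sub,
    Prod.smul_fst, Prod.smul_snd, smul_eq_mul]
  ring

lemma det2_smul_left (s : ℝ) (u v : Pt) : det2 (s • u) v = s * det2 u v := by
  simp only [det2, Prod.smul_fst, Prod.smul_snd, smul_eq_mul]; ring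

lemma det2_smul_right (s : ℝ) (u v : Pt) : det2 u (s • v) = s * det2 u v := by
  simp only [det2, Prod.smul_fst, Prod.smul_snd, smul_eq_mul]; ring

lemma det2_swap (u v : Pt) : det2 u v = - det2 v u := by simp [det2]; ring

lemma det2_zero_left (v : Pt) : det2 0 v = 0 := by simp [det2]

lemma det2_self (u : Pt) : det2 u u = 0 := by simp [det2, mul_comm]

/-- parallel lemma -/
lemma det2_eq_zero_imp (u v : Pt) (hu : u ≠ 0) (h : det2 u v = 0) : ∃ t : ℝ, v = t • u := by
  rcases eq_or_ne u.1 0 with h1 | h1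
  · have h2 : u.2 ≠ 0 := by
      intro h2; exact hu (Prod.ext h1 h2)
    refine ⟨v.2 / u.2, ?_⟩
    have hv1 : v.1 = 0 := by
      simp only [det2, h1] at h
      have h3 : u.2 * v.1 = 0 := by linarith
      rcases mul_eq_zero.mp h3 with h4 | h4
      · exact absurd h4 h2
      · exact h4
    exact Prod.ext (by simp [Prod.smul_fst, h1, hv1]) (by simp [Prod.smul_snd]; field_simp)
  · refine ⟨v.1 / u.1, ?_⟩
    have h2 : v.2 = v.1 / u.1 * u.2 := by
      field_simp
      simp only [det2] at h
      nlinarith [h]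
    exact Prod.ext (by simp [Prod.smul_fst]; field_simp) (by simpa using h2)

/-- collinearity from det vanishing -/
lemma collinear_of_det2 {p q r : Pt} (h : det2 (q - p) (r - p) = 0) :
    Collinear ℝ ({p, q, r} : Set Pt) := by
  rcases eq_or_ne q p with rfl | hqp
  · have h2 : ({q, q, r} : Set Pt) = {q, r} := by simp
    rw [h2]
    exact collinear_pair ℝ q r
  · obtain ⟨t, ht⟩ := det2_eq_zero_imp _ _ (fun h0 => hqp (by
      have := sub_eq_zero.mp h0; exact this)) h
    rw [collinear_iff_exists_forall_eq_smul_vadd]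
    refine ⟨p, q - p, ?_⟩
    intro x hx
    rcases hx with rfl | rfl | rfl
    · exact ⟨0, by simp⟩
    · exact ⟨1, by simp⟩
    · exact ⟨t, by rw [← ht]; simp⟩

lemma gp_det_ne {P : Finset Pt} (hgp : GenPos P) {p q r : Pt} (hp : p ∈ P) (hq : q ∈ P)
    (hr : r ∈ P) (hpq : p ≠ q) (hpr : p ≠ r) (hqr : q ≠ r) : det2 (q - p) (r - p) ≠ 0 :=
  fun h => hgp p hp q hq r hr hpq hpr hqr (collinear_of_det2 h)

lemma mem_openSegment_param {x y : Pt} {t : ℝ} (h0 : 0 < t) (h1 : t < 1) :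
    x + t • (y - x) ∈ openSegment ℝ x y := by
  rw [openSegment_eq_image']
  exact ⟨t, ⟨h0, h1⟩, rfl⟩

lemma gp_not_mem_openSegment {P : Finset Pt} (hgp : GenPos P) {b c r : Pt}
    (hb : b ∈ P) (hc : c ∈ P) (hr : r ∈ P) (hbc : b ≠ c) (hbr : b ≠ r) (hcr : c ≠ r)
    (h : r ∈ openSegment ℝ b c) : False := by
  rw [openSegment_eq_image'] at h
  obtain ⟨t, _, ht⟩ := h
  dsimp only at ht
  have hrb : r - b = t • (c - b) := by rw [← ht]; abel
  have hdet : det2 (c - b) (r - b) = 0 := by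
    rw [hrb, det2_smul_right, det2_self, mul_zero]
  exact hgp b hb c hc r hr hbc hbr hcr (collinear_of_det2 hdet)

lemma prop_ne_of {P Q : Prop} (hP : P) (hQ : ¬Q) : P ≠ Q := fun e => hQ (e ▸ hP)
lemma prop_ne_of' {P Q : Prop} (hP : ¬P) (hQ : Q) : P ≠ Q := fun e => hP (e ▸ hQ)

set_option maxHeartbeats 3200000 in
lemma signLemma (d12 d13 d23 f1 f2 f3 : ℝ)
    (h12 : d12 ≠ 0) (h13 : d13 ≠ 0) (h23 : d23 ≠ 0)
    (hf1 : f1 ≠ 0) (hf2 : f2 ≠ 0) (hf3 : f3 ≠ 0)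
    (hGP : d12 * f3 - d13 * f2 + d23 * f1 = 0) :
    ((0 < -f2 * d12 ∧ 0 < f1 * d12) ≠ (0 < -d23 * d12 ∧ 0 < d13 * d12)) ∨
    ((0 < -f3 * d13 ∧ 0 < f1 * d13) ≠ (0 < d23 * d13 ∧ 0 < d12 * d13)) ∨
    ((0 < -f3 * d23 ∧ 0 < f2 * d23) ≠ (0 < d13 * d23 ∧ 0 < -d12 * d23)) := by
  rcases h12.lt_or_gt with h12 | h12 <;>
  rcases h13.lt_or_gt with h13 | h13 <;>
  rcases h23.lt_or_gt with h23 | h23 <;>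
  rcases hf1.lt_or_gt with hf1 | hf1 <;>
  rcases hf2.lt_or_gt with hf2 | hf2 <;>
  rcases hf3.lt_or_gt with hf3 | hf3 <;>
  first
  | exact absurd hGP (by nlinarith)
  | exact Or.inl (prop_ne_of ⟨by nlinarith, by nlinarith⟩ (by rintro ⟨u, v⟩; nlinarith))
  | exact Or.inl (prop_ne_of' (by rintro ⟨u, v⟩; nlinarith) ⟨by nlinarith, by nlinarith⟩)
  | exact Or.inr (Or.inl (prop_ne_of ⟨by nlinarith, by nlinarith⟩ (by rintro ⟨u, v⟩; nlinarith)))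
  | exact Or.inr (Or.inl (prop_ne_of' (by rintro ⟨u, v⟩; nlinarith) ⟨by nlinarith, by nlinarith⟩))
  | exact Or.inr (Or.inr (prop_ne_of ⟨by nlinarith, by nlinarith⟩ (by rintro ⟨u, v⟩; nlinarith)))
  | exact Or.inr (Or.inr (prop_ne_of' (by rintro ⟨u, v⟩; nlinarith) ⟨by nlinarith, by nlinarith⟩))

/-- membership in the open positive cone spanned by `u` and `v` -/
def PosCone (u v w : Pt) : Prop :=
  0 < det2 w v * det2 u v ∧ 0 < det2 u w * det2 u v

lemma signLemma2 (e1 e2 e3 y : Pt)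
    (h12 : det2 e1 e2 ≠ 0) (h13 : det2 e1 e3 ≠ 0) (h23 : det2 e2 e3 ≠ 0)
    (hf1 : det2 e1 y ≠ 0) (hf2 : det2 e2 y ≠ 0) (hf3 : det2 e3 y ≠ 0) :
    (PosCone e1 e2 y ≠ PosCone e1 e2 e3) ∨ (PosCone e1 e3 y ≠ PosCone e1 e3 e2) ∨
      (PosCone e2 e3 y ≠ PosCone e2 e3 e1) := by
  have hGP : det2 e1 e2 * det2 e3 y - det2 e1 e3 * det2 e2 y + det2 e2 e3 * det2 e1 y = 0 := by
    simp only [det2]; ring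
  have H := signLemma _ _ _ _ _ _ h12 h13 h23 hf1 hf2 hf3 hGP
  simp only [PosCone]
  rw [det2_swap y e2, det2_swap y e3, det2_swap e3 e2, det2_swap e2 e1]
  exact H

end Aux
section Aux2

/-- A hull vertex cannot lie in the open segment between two points of the hull. -/
lemma ext_lemma {P : Finset Pt} {v : Pt} (hv : v ∈ hullVx P) (hne : (P.erase v).Nonempty)
    {x y : Pt} (hx : x ∈ convexHull ℝ (P : Set Pt)) (hy : y ∈ convexHull ℝ (P : Set Pt))
    (hxv : x ≠ v) (hmem : v ∈ openSegment ℝ x y) : False := by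
  rw [hullVx, Finset.mem_filter] at hv
  obtain ⟨hvP, hvK⟩ := hv
  have hPeq : (P : Set Pt) = insert v (↑(P.erase v) : Set Pt) := by
    rw [← Finset.coe_insert, Finset.insert_erase hvP]
  have hne' : (↑(P.erase v) : Set Pt).Nonempty := by
    exact_mod_cast hne
  rw [hPeq, convexHull_insert hne', convexJoin_singleton_left] at hx hy
  obtain ⟨w1, hw1, hxseg⟩ := Set.mem_iUnion₂.mp hx
  obtain ⟨w2, hw2, hyseg⟩ := Set.mem_iUnion₂.mp hy
  simp only [segment, Set.mem_setOf_eq] at hxseg hyseg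
  simp only [openSegment, Set.mem_setOf_eq] at hmem
  obtain ⟨a1, b1, ha1, hb1, hab1, hxeq⟩ := hxseg
  obtain ⟨a2, b2, ha2, hb2, hab2, hyeq⟩ := hyseg
  obtain ⟨g, d, hg, hd, hgd, hveq⟩ := hmem
  -- component equations
  have e1f : g * x.1 + d * y.1 = v.1 := by
    have := congrArg Prod.fst hveq; simpa [Prod.smul_fst] using this
  have e1s : g * x.2 + d * y.2 = v.2 := by
    have := congrArg Prod.snd hveq; simpa [Prod.smul_snd] using this
  have e2f : a1 * v.1 + b1 * w1.1 = x.1 := by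
    have := congrArg Prod.fst hxeq; simpa [Prod.smul_fst] using this
  have e2s : a1 * v.2 + b1 * w1.2 = x.2 := by
    have := congrArg Prod.snd hxeq; simpa [Prod.smul_snd] using this
  have e3f : a2 * v.1 + b2 * w2.1 = y.1 := by
    have := congrArg Prod.fst hyeq; simpa [Prod.smul_fst] using this
  have e3s : a2 * v.2 + b2 * w2.2 = y.2 := by
    have := congrArg Prod.snd hyeq; simpa [Prod.smul_snd] using this
  set c : ℝ := g * b1 + d * b2 with hc
  have hc0 : 0 ≤ c := by positivity
  have hcomp1 : c * v.1 = g * b1 * w1.1 + d * b2 * w2.1 := by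
    linear_combination (-1 : ℝ) * e1f - g * e2f - d * e3f + (v.1 * g) * hab1 +
      (v.1 * d) * hab2 + v.1 * hgd
  have hcomp2 : c * v.2 = g * b1 * w1.2 + d * b2 * w2.2 := by
    linear_combination (-1 : ℝ) * e1s - g * e2s - d * e3s + (v.2 * g) * hab1 +
      (v.2 * d) * hab2 + v.2 * hgd
  rcases eq_or_lt_of_le hc0 with hceq | hcpos
  · -- c = 0 : then b1 = 0 and x = v
    have hgb1 : g * b1 = 0 := by nlinarith [mul_nonneg hg.le hb1, mul_nonneg hd.le hb2]
    have hb1z : b1 = 0 := by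
      rcases mul_eq_zero.mp hgb1 with h | h
      · exact absurd h hg.ne'
      · exact h
    have ha11 : a1 = 1 := by linarith
    apply hxv
    rw [← hxeq, hb1z, ha11]
    simp
  · -- c > 0 : v is a convex combination of w1 w2 ∈ K
    apply hvK
    have hseg : v ∈ segment ℝ w1 w2 := by
      refine ⟨g * b1 / c, d * b2 / c, by positivity, by positivity, ?_, ?_⟩
      · field_simp; exact hc.symm
      · apply Prod.ext
        · simp only [Prod.fst_add, Prod.smul_fst, smul_eq_mul]
          field_simp
          linear_combination (-1 : ℝ) * hcomp1
        · simp only [Prod.snd_add, Prod.smul_snd, smul_eq_mul]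
          field_simp
          linear_combination (-1 : ℝ) * hcomp2
    exact (convex_convexHull ℝ _).segment_subset hw1 hw2 hseg

/-- if an edge of the triangulation crosses the open ray from `a` through the
hull vertex `v`, where `av` is also an edge, we get a contradiction. -/
lemma rayhit {P : Finset Pt} (hgp : GenPos P) (T : Triangulation P) (hcard : 5 ≤ P.card)
    {a v b c z : Pt} (ha : a ∈ P) (hvh : v ∈ hullVx P) (hav : T.toPlaneGraph.Adj a v)
    (hbc : T.toPlaneGraph.Adj b c)
    (hba : b ≠ a) (hbv : b ≠ v) (hca : c ≠ a) (hcv : c ≠ v)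
    (hz : z ∈ openSegment ℝ b c) {s : ℝ} (hs : 0 < s) (hzs : z = a + s • (v - a)) : False := by
  have hvP : v ∈ P := (Finset.mem_filter.mp hvh).1
  have hb : b ∈ P := T.toPlaneGraph.mem_left hbc
  have hc : c ∈ P := T.toPlaneGraph.mem_left (T.toPlaneGraph.symm hbc)
  have hav' : a ≠ v := T.toPlaneGraph.ne hav
  have hbcne : b ≠ c := T.toPlaneGraph.ne hbc
  have hzhull : z ∈ convexHull ℝ (P : Set Pt) :=
    (convex_convexHull ℝ _).segment_subset (subset_convexHull ℝ _ hb)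
      (subset_convexHull ℝ _ hc) (openSegment_subset_segment ℝ b c hz)
  rcases lt_trichotomy s 1 with hs1 | hs1 | hs1
  · -- z ∈ openSegment a v : noncross
    have hz2 : z ∈ openSegment ℝ a v := by
      rw [openSegment_eq_image']
      exact ⟨s, ⟨hs, hs1⟩, hzs.symm⟩
    have heq := T.toPlaneGraph.noncross hbc hav ⟨z, hz, hz2⟩
    have hbm : b ∈ ({a, v} : Set Pt) := by
      rw [← heq]; simp
    rcases hbm with h | h
    · exact hba h
    · exact hbv h
  · -- s = 1 : z = v lies in open segment b c : collinear
    have hzv : z = v := by rw [hzs, hs1, one_smul]; abel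
    rw [hzv] at hz
    exact gp_not_mem_openSegment hgp hb hc hvP hbcne hbv hcv hz
  · -- s > 1 : v ∈ openSegment a z, contradicting extremality
    have hinv : v = a + (1/s) • (z - a) := by
      rw [hzs, show a + s • (v - a) - a = s • (v - a) from by abel, smul_smul, one_div,
        inv_mul_cancel₀ hs.ne', one_smul]
      abel
    have hmem : v ∈ openSegment ℝ a z := by
      rw [openSegment_eq_image']
      refine ⟨1/s, ⟨by positivity, ?_⟩, hinv.symm⟩
      rw [div_lt_one hs]; exact hs1
    have hne : (P.erase v).Nonempty := by
      rw [← Finset.card_pos, Finset.card_erase_of_mem hvP]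
      omega
    exact ext_lemma hvh hne (subset_convexHull ℝ _ ha) hzhull hav' hmem

end Aux2
section Aux3

/-- endgame: an edge passing through the open ray from `a` towards hull vertex `v`. -/
lemma ray_endgame {P : Finset Pt} (hgp : GenPos P) (T : Triangulation P) (hcard : 5 ≤ P.card)
    {a v b c z : Pt} (ha : a ∈ P) (hvh : v ∈ hullVx P) (hav : T.toPlaneGraph.Adj a v)
    (hbc : T.toPlaneGraph.Adj b c)
    (hba : b ≠ a) (hbv : b ≠ v) (hca : c ≠ a) (hcv : c ≠ v)
    (hz : z ∈ openSegment ℝ b c)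
    (hpar : det2 (v - a) (z - a) = 0)
    (hspos : ∀ s : ℝ, z - a = s • (v - a) → 0 < s) : False := by
  have hav' : a ≠ v := T.toPlaneGraph.ne hav
  have hvne : v - a ≠ 0 := sub_ne_zero.mpr (Ne.symm hav')
  obtain ⟨s, hs⟩ := det2_eq_zero_imp _ _ hvne hpar
  have hs0 : 0 < s := hspos s hs
  have hzz : z = a + s • (v - a) := by rw [← hs]; abel
  exact rayhit hgp T hcard ha hvh hav hbc hba hbv hca hcv hz hs0 hzz

/-- main crossing lemma : an edge of `T` cannot go from the open cone at `a`
spanned by the directions of hull-vertex neighbours `v1`, `v2` to its closed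
complement. -/
lemma crossing {P : Finset Pt} (hgp : GenPos P) (T : Triangulation P) (hcard : 5 ≤ P.card)
    {a v1 v2 b c : Pt} (ha : a ∈ P) (h1 : v1 ∈ hullVx P) (h2 : v2 ∈ hullVx P)
    (h12 : v1 ≠ v2) (hA1 : T.toPlaneGraph.Adj a v1) (hA2 : T.toPlaneGraph.Adj a v2)
    (hbc : T.toPlaneGraph.Adj b c)
    (hba : b ≠ a) (hb1 : b ≠ v1) (hb2 : b ≠ v2) (hca : c ≠ a) (hc1 : c ≠ v1) (hc2 : c ≠ v2)
    (hPb : PosCone (v1 - a) (v2 - a) (b - a)) (hPc : ¬ PosCone (v1 - a) (v2 - a) (c - a)) :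
    False := by
  have h1P : v1 ∈ P := (Finset.mem_filter.mp h1).1
  have h2P : v2 ∈ P := (Finset.mem_filter.mp h2).1
  have hbP : b ∈ P := T.toPlaneGraph.mem_left hbc
  have hcP : c ∈ P := T.toPlaneGraph.mem_left (T.toPlaneGraph.symm hbc)
  have hbcne : b ≠ c := T.toPlaneGraph.ne hbc
  have hav1 : a ≠ v1 := T.toPlaneGraph.ne hA1
  have hav2 : a ≠ v2 := T.toPlaneGraph.ne hA2
  obtain ⟨hAb, hBb⟩ := hPb
  set e1 : Pt := v1 - a with he1
  set e2 : Pt := v2 - a with he2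
  set D : ℝ := det2 e1 e2 with hD
  have hDne : D ≠ 0 := gp_det_ne hgp ha h1P h2P hav1 hav2 h12
  have hD2 : 0 < D * D := mul_self_pos.mpr hDne
  have he1ne : e1 ≠ 0 := fun h => hDne (by rw [hD, h, det2_zero_left])
  set αb : ℝ := det2 (b - a) e2 with hαb
  set βb : ℝ := det2 e1 (b - a) with hβb
  set αc : ℝ := det2 (c - a) e2 with hαc
  set βc : ℝ := det2 e1 (c - a) with hβc
  -- hAb : 0 < αb * D ; hBb : 0 < βb * D
  have hαcne : αc * D ≠ 0 :=
    mul_ne_zero (gp_det_ne hgp ha hcP h2P hca.symm hav2 hc2) hDne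
  have hβcne : βc * D ≠ 0 :=
    mul_ne_zero (gp_det_ne hgp ha h1P hcP hav1 hca.symm hc1.symm) hDne
  rcases hβcne.lt_or_gt with hβcD | hβcD
  · -- case (i) : βc * D < 0, crossing of the ray at v1 after possibly re-crossing
    have hden : 0 < βb * D - βc * D := by linarith
    set t : ℝ := βb * D / (βb * D - βc * D) with ht
    have ht0 : 0 < t := div_pos hBb hden
    have ht1 : t < 1 := by rw [ht, div_lt_one hden]; linarith
    have hzseg : b + t • (c - b) ∈ openSegment ℝ b c := mem_openSegment_param ht0 ht1
    have hβ0 : (1 - t) * βb + t * βc = 0 := by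
      have h' : βb - βc ≠ 0 := fun h => by rw [sub_eq_zero.mp h, sub_self] at hden; exact lt_irrefl _ hden
      rw [ht]; field_simp; ring
    have hβz : det2 e1 (b + t • (c - b) - a) = 0 := by
      rw [det2_affine₂, ← hβb, ← hβc]; exact hβ0
    have hαz : det2 (b + t • (c - b) - a) e2 = (1 - t) * αb + t * αc := by
      rw [det2_affine₁, ← hαb, ← hαc]
    rcases lt_trichotomy (((1 - t) * αb + t * αc) * D) 0 with hA | hA | hA
    · -- need to re-cross towards the ray at v2
      set αz : ℝ := (1 - t) * αb + t * αc with hαzv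
      have hdenu : 0 < αb * D - αz * D := by linarith
      set u : ℝ := αb * D / (αb * D - αz * D) with hu
      have hu0 : 0 < u := div_pos hAb hdenu
      have hu1 : u < 1 := by rw [hu, div_lt_one hdenu]; linarith
      have hut0 : 0 < u * t := mul_pos hu0 ht0
      have hut1 : u * t < 1 := by nlinarith
      have hz'seg : b + (u * t) • (c - b) ∈ openSegment ℝ b c := mem_openSegment_param hut0 hut1
      have hαz' : det2 (b + (u * t) • (c - b) - a) e2 = 0 := by
        rw [det2_affine₁, ← hαb, ← hαc]
        have expand : (1 - u * t) * αb + u * t * αc =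
            (1 - u) * αb + u * ((1 - t) * αb + t * αc) := by ring
        rw [expand, ← hαzv, hu]
        have h' : αb - αz ≠ 0 := fun h => by rw [sub_eq_zero.mp h, sub_self] at hdenu; exact lt_irrefl _ hdenu
        field_simp; ring
      have hβz' : det2 e1 (b + (u * t) • (c - b) - a) = (1 - u * t) * βb + (u * t) * βc := by
        rw [det2_affine₂, ← hβb, ← hβc]
      have hβz'pos : 0 < det2 e1 (b + (u * t) • (c - b) - a) * D := by
        rw [hβz']
        have e : ((1 - u * t) * βb + u * t * βc) * D = (1 - u) * (βb * D) + u * (((1 - t) * βb + t * βc) * D) := by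
          ring
        rw [e, hβ0, zero_mul, mul_zero, add_zero]
        exact mul_pos (by linarith) hBb
      refine ray_endgame hgp T hcard ha h2 hA2 hbc hba hb2 hca hc2 hz'seg ?_ ?_
      · rw [← he2, det2_swap, hαz', neg_zero]
      · intro s hs
        have hsd : det2 e1 (b + (u * t) • (c - b) - a) = s * D := by
          rw [hs, ← he2, det2_smul_right]
        rw [hsd] at hβz'pos
        by_contra hsn
        push_neg at hsn
        nlinarith [hD2]
    · -- the crossing point is `a` itself : collinearity contradiction
      have hαz0 : (1 - t) * αb + t * αc = 0 := by
        rcases mul_eq_zero.mp hA with h | h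
        · exact h
        · exact absurd h hDne
      obtain ⟨s, hs⟩ := det2_eq_zero_imp e1 (b + t • (c - b) - a) he1ne hβz
      have hs0 : s = 0 := by
        have : det2 (b + t • (c - b) - a) e2 = s * D := by rw [hs, det2_smul_left, hD]
        rw [hαz] at this
        have hsD : s * D = 0 := by rw [← this, hαz0]
        rcases mul_eq_zero.mp hsD with h | h
        · exact h
        · exact absurd h hDne
      have hza : b + t • (c - b) = a := by
        have : b + t • (c - b) - a = 0 := by rw [hs, hs0, zero_smul]
        have := sub_eq_zero.mp this
        exact this
      rw [hza] at hzseg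
      exact gp_not_mem_openSegment hgp hbP hcP ha hbcne hba hca hzseg
    · -- direct hit of the ray at v1
      refine ray_endgame hgp T hcard ha h1 hA1 hbc hba hb1 hca hc1 hzseg ?_ ?_
      · rw [← he1]; exact hβz
      · intro s hs
        have hsd : det2 (b + t • (c - b) - a) e2 = s * D := by
          rw [hs, ← he1, det2_smul_left, hD]
        rw [hαz] at hsd
        rw [hsd] at hA
        by_contra hsn
        push_neg at hsn
        nlinarith [hD2]
  · -- case (ii) : βc * D > 0, hence αc * D < 0 ; crossing of the ray at v2
    have hαcD : αc * D < 0 := by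
      rcases hαcne.lt_or_gt with h | h
      · exact h
      · exact absurd ⟨h, hβcD⟩ hPc
    have hden : 0 < αb * D - αc * D := by linarith
    set t : ℝ := αb * D / (αb * D - αc * D) with ht
    have ht0 : 0 < t := div_pos hAb hden
    have ht1 : t < 1 := by rw [ht, div_lt_one hden]; linarith
    have hzseg : b + t • (c - b) ∈ openSegment ℝ b c := mem_openSegment_param ht0 ht1
    have hα0 : (1 - t) * αb + t * αc = 0 := by
      have h' : αb - αc ≠ 0 := fun h => by rw [sub_eq_zero.mp h, sub_self] at hden; exact lt_irrefl _ hden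
      rw [ht]; field_simp; ring
    have hαz : det2 (b + t • (c - b) - a) e2 = 0 := by
      rw [det2_affine₁, ← hαb, ← hαc]; exact hα0
    have hβz : det2 e1 (b + t • (c - b) - a) = (1 - t) * βb + t * βc := by
      rw [det2_affine₂, ← hβb, ← hβc]
    have hβzpos : 0 < det2 e1 (b + t • (c - b) - a) * D := by
      rw [hβz]
      have e : ((1 - t) * βb + t * βc) * D = (1 - t) * (βb * D) + t * (βc * D) := by ring
      rw [e]
      have := mul_pos (show (0:ℝ) < 1 - t by linarith) hBb
      have := mul_pos ht0 hβcD
      linarith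
    refine ray_endgame hgp T hcard ha h2 hA2 hbc hba hb2 hca hc2 hzseg ?_ ?_
    · rw [← he2, det2_swap, hαz, neg_zero]
    · intro s hs
      have hsd : det2 e1 (b + t • (c - b) - a) = s * D := by
        rw [hs, ← he2, det2_smul_right]
      rw [hsd] at hβzpos
      by_contra hsn
      push_neg at hsn
      nlinarith [hD2]

end Aux3
section Aux4

lemma walk_boundary {V : Type*} {G : SimpleGraph V} (Q : V → Prop) {x y : V}
    (w : G.Walk x y) : Q x → ¬Q y → ∃ b c, G.Adj b c ∧ Q b ∧ ¬Q c := by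
  induction w with
  | nil => exact fun hx hy => absurd hx hy
  | @cons u v' y' h p ih =>
      exact fun hx hy => if hQ : Q v' then ih hQ hy else ⟨u, v', h, hx, hQ⟩

lemma min_degree {P : Finset Pt} (T : Triangulation P)
    (hK : KConnected T.toPlaneGraph.graph 4) {v : Pt} (hv : v ∈ P) :
    4 ≤ (P.filter (fun u => T.toPlaneGraph.Adj v u)).card := by
  by_contra hlt
  push_neg at hlt
  classical
  set S : Finset {x // x ∈ P} := Finset.univ.filter (fun u => T.toPlaneGraph.Adj v ↑u) with hS
  have hScard : S.card < 4 := by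
    have hmaps : ∀ u ∈ S, u.1 ∈ P.filter (fun u => T.toPlaneGraph.Adj v u) := by
      intro u hu
      have hu' : T.toPlaneGraph.Adj v ↑u := (Finset.mem_filter.mp hu).2
      rw [Finset.mem_filter]
      exact ⟨u.2, hu'⟩
    have := Finset.card_le_card_of_injOn (fun (u : {x // x ∈ P}) => u.1) hmaps
      (fun u _ u' _ h => Subtype.ext h)
    omega
  have hconn := hK.2 S hScard
  have hvS : (⟨v, hv⟩ : {x // x ∈ P}) ∈ ((↑S : Set {x // x ∈ P})ᶜ) := by
    have hnadj : ¬ T.toPlaneGraph.Adj v v := fun h => T.toPlaneGraph.ne h rfl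
    simp [hS, hnadj]
  have hcard5 : 5 ≤ Fintype.card {x // x ∈ P} := hK.1
  have hex : ∃ u : {x // x ∈ P}, u ∉ S ∧ u ≠ ⟨v, hv⟩ := by
    by_contra hno
    push_neg at hno
    have hsub : (Finset.univ : Finset {x // x ∈ P}) ⊆ insert ⟨v, hv⟩ S := by
      intro u _
      by_cases h : u ∈ S
      · exact Finset.mem_insert_of_mem h
      · rw [hno u h]; exact Finset.mem_insert_self _ _
    have h1 := Finset.card_le_card hsub
    rw [Finset.card_univ] at h1
    have h2 := Finset.card_insert_le (⟨v, hv⟩ : {x // x ∈ P}) S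
    omega
  obtain ⟨u, huS, huv⟩ := hex
  have huC : u ∈ ((↑S : Set {x // x ∈ P})ᶜ) := by simpa using huS
  obtain ⟨w⟩ := hconn.preconnected ⟨⟨v, hv⟩, hvS⟩ ⟨u, huC⟩
  obtain ⟨b, c, hadj, hQb, hQc⟩ :=
    walk_boundary (fun z => z.1 = ⟨v, hv⟩) w rfl (fun h => huv h)
  have hadj1 : T.toPlaneGraph.graph.Adj b.1 c.1 := hadj
  rw [hQb] at hadj1
  have hadj' : T.toPlaneGraph.Adj v (c.1 : Pt) := hadj1
  have hcS : c.1 ∈ S := Finset.mem_filter.mpr ⟨Finset.mem_univ _, hadj'⟩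
  have := c.2
  simp only [Set.mem_compl_iff, Finset.mem_coe] at this
  exact this hcS

lemma cut_lemma {P : Finset Pt} (hgp : GenPos P) (T : Triangulation P)
    (hK : KConnected T.toPlaneGraph.graph 4)
    {a vi vj vk x : Pt} (ha : a ∈ P) (hvi : vi ∈ hullVx P) (hvj : vj ∈ hullVx P)
    (hvk : vk ∈ P) (hx : x ∈ P)
    (hAi : T.toPlaneGraph.Adj a vi) (hAj : T.toPlaneGraph.Adj a vj)
    (hij : vi ≠ vj) (hki : vk ≠ vi) (hkj : vk ≠ vj) (hka : vk ≠ a)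
    (hxa : x ≠ a) (hxi : x ≠ vi) (hxj : x ≠ vj)
    (hQne : PosCone (vi - a) (vj - a) (x - a) ≠ PosCone (vi - a) (vj - a) (vk - a)) :
    False := by
  classical
  have hcard5 : 5 ≤ P.card := by
    have := hK.1; rwa [Fintype.card_coe] at this
  have hviP : vi ∈ P := (Finset.mem_filter.mp hvi).1
  have hvjP : vj ∈ P := (Finset.mem_filter.mp hvj).1
  set S : Finset {x // x ∈ P} := {⟨a, ha⟩, ⟨vi, hviP⟩, ⟨vj, hvjP⟩} with hS
  have hScard : S.card < 4 := by
    have h3 : S.card ≤ 3 := by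
      apply (Finset.card_insert_le _ _).trans
      apply Nat.succ_le_succ
      apply (Finset.card_insert_le _ _).trans
      simp
    omega
  have hconn := hK.2 S hScard
  have hxC : (⟨x, hx⟩ : {x // x ∈ P}) ∈ ((↑S : Set {x // x ∈ P})ᶜ) := by
    simp only [hS, Finset.coe_insert, Finset.coe_singleton, Set.mem_compl_iff,
      Set.mem_insert_iff, Set.mem_singleton_iff, Subtype.mk.injEq]
    push_neg
    exact ⟨hxa, hxi, hxj⟩
  have hkC : (⟨vk, hvk⟩ : {x // x ∈ P}) ∈ ((↑S : Set {x // x ∈ P})ᶜ) := by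
    simp only [hS, Finset.coe_insert, Finset.coe_singleton, Set.mem_compl_iff,
      Set.mem_insert_iff, Set.mem_singleton_iff, Subtype.mk.injEq]
    push_neg
    exact ⟨hka, hki, hkj⟩
  have hfinish : ∀ b c : ((↑S : Set {x // x ∈ P})ᶜ : Set _),
      (T.toPlaneGraph.graph.induce ((↑S : Set {x // x ∈ P})ᶜ)).Adj b c →
      PosCone (vi - a) (vj - a) ((b.1.1 : Pt) - a) →
      ¬ PosCone (vi - a) (vj - a) ((c.1.1 : Pt) - a) → False := by
    intro b c hadj hQb hQc
    have hadj' : T.toPlaneGraph.Adj (b.1.1 : Pt) (c.1.1 : Pt) := hadj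
    have hbS : b.1 ∉ ({⟨a, ha⟩, ⟨vi, hviP⟩, ⟨vj, hvjP⟩} : Finset {x // x ∈ P}) := by
      have h2 := b.2
      simp only [Set.mem_compl_iff, Finset.mem_coe] at h2
      exact h2
    have hcS : c.1 ∉ ({⟨a, ha⟩, ⟨vi, hviP⟩, ⟨vj, hvjP⟩} : Finset {x // x ∈ P}) := by
      have h2 := c.2
      simp only [Set.mem_compl_iff, Finset.mem_coe] at h2
      exact h2
    rw [Finset.mem_insert, Finset.mem_insert, Finset.mem_singleton] at hbS hcS
    push_neg at hbS hcS
    obtain ⟨hb_a, hb_i, hb_j⟩ := hbS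
    obtain ⟨hc_a, hc_i, hc_j⟩ := hcS
    have hba : (b.1.1 : Pt) ≠ a := fun h => hb_a (Subtype.ext h)
    have hbi : (b.1.1 : Pt) ≠ vi := fun h => hb_i (Subtype.ext h)
    have hbj : (b.1.1 : Pt) ≠ vj := fun h => hb_j (Subtype.ext h)
    have hca : (c.1.1 : Pt) ≠ a := fun h => hc_a (Subtype.ext h)
    have hci : (c.1.1 : Pt) ≠ vi := fun h => hc_i (Subtype.ext h)
    have hcj : (c.1.1 : Pt) ≠ vj := fun h => hc_j (Subtype.ext h)
    exact crossing hgp T hcard5 ha hvi hvj hij hAi hAj hadj'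
      hba hbi hbj hca hci hcj hQb hQc
  by_cases hx1 : PosCone (vi - a) (vj - a) (x - a)
  · have hk1 : ¬ PosCone (vi - a) (vj - a) (vk - a) :=
      fun hk => hQne (propext (iff_of_true hx1 hk))
    obtain ⟨w⟩ := hconn.preconnected ⟨⟨x, hx⟩, hxC⟩ ⟨⟨vk, hvk⟩, hkC⟩
    obtain ⟨b, c, hadj, hQb, hQc⟩ :=
      walk_boundary (fun z => PosCone (vi - a) (vj - a) ((z.1.1 : Pt) - a)) w hx1 hk1
    exact hfinish b c hadj hQb hQc
  · have hk1 : PosCone (vi - a) (vj - a) (vk - a) := by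
      by_contra hk
      exact hQne (propext (iff_of_false hx1 hk))
    obtain ⟨w⟩ := hconn.preconnected ⟨⟨vk, hvk⟩, hkC⟩ ⟨⟨x, hx⟩, hxC⟩
    obtain ⟨b, c, hadj, hQb, hQc⟩ :=
      walk_boundary (fun z => PosCone (vi - a) (vj - a) ((z.1.1 : Pt) - a)) w hk1 hx1
    exact hfinish b c hadj hQb hQc

lemma two_hull_nbrs {P : Finset Pt} (hgp : GenPos P) (T : Triangulation P)
    (hK : KConnected T.toPlaneGraph.graph 4) {a : Pt} (ha : a ∈ P) :
    ((hullVx P).filter (fun u => T.toPlaneGraph.Adj a u)).card ≤ 2 := by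
  by_contra h
  push_neg at h
  obtain ⟨s, hs_sub, hs3⟩ := Finset.exists_subset_card_eq
    (show 3 ≤ ((hullVx P).filter (fun u => T.toPlaneGraph.Adj a u)).card by omega)
  obtain ⟨v1, v2, v3, h12, h13, h23, rfl⟩ := Finset.card_eq_three.mp hs3
  have hm1 := Finset.mem_filter.mp (hs_sub (Finset.mem_insert_self v1 {v2, v3}))
  have hm2 := Finset.mem_filter.mp (hs_sub
    (Finset.mem_insert_of_mem (Finset.mem_insert_self v2 {v3})))
  have hm3 := Finset.mem_filter.mp (hs_sub
    (Finset.mem_insert_of_mem (Finset.mem_insert_of_mem (Finset.mem_singleton_self v3))))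
  obtain ⟨hv1h, hA1⟩ := hm1
  obtain ⟨hv2h, hA2⟩ := hm2
  obtain ⟨hv3h, hA3⟩ := hm3
  have h1P : v1 ∈ P := (Finset.mem_filter.mp hv1h).1
  have h2P : v2 ∈ P := (Finset.mem_filter.mp hv2h).1
  have h3P : v3 ∈ P := (Finset.mem_filter.mp hv3h).1
  have hav1 : a ≠ v1 := T.toPlaneGraph.ne hA1
  have hav2 : a ≠ v2 := T.toPlaneGraph.ne hA2
  have hav3 : a ≠ v3 := T.toPlaneGraph.ne hA3
  have hcard5 : 5 ≤ P.card := by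
    have := hK.1; rwa [Fintype.card_coe] at this
  have hvalid : ¬ (P ⊆ {a, v1, v2, v3}) := by
    intro hsub
    have h4 : ({a, v1, v2, v3} : Finset Pt).card ≤ 4 := by
      apply (Finset.card_insert_le _ _).trans
      apply Nat.succ_le_succ
      apply (Finset.card_insert_le _ _).trans
      apply Nat.succ_le_succ
      apply (Finset.card_insert_le _ _).trans
      simp
    have := Finset.card_le_card hsub
    omega
  obtain ⟨x, hxP, hxnot⟩ := Finset.not_subset.mp hvalid
  simp only [Finset.mem_insert, Finset.mem_singleton] at hxnot
  push_neg at hxnot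
  obtain ⟨hxa, hx1, hx2, hx3⟩ := hxnot
  have d12 : det2 (v1 - a) (v2 - a) ≠ 0 := gp_det_ne hgp ha h1P h2P hav1 hav2 h12
  have d13 : det2 (v1 - a) (v3 - a) ≠ 0 := gp_det_ne hgp ha h1P h3P hav1 hav3 h13
  have d23 : det2 (v2 - a) (v3 - a) ≠ 0 := gp_det_ne hgp ha h2P h3P hav2 hav3 h23
  have f1 : det2 (v1 - a) (x - a) ≠ 0 := gp_det_ne hgp ha h1P hxP hav1 hxa.symm hx1.symm
  have f2 : det2 (v2 - a) (x - a) ≠ 0 := gp_det_ne hgp ha h2P hxP hav2 hxa.symm hx2.symm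
  have f3 : det2 (v3 - a) (x - a) ≠ 0 := gp_det_ne hgp ha h3P hxP hav3 hxa.symm hx3.symm
  rcases signLemma2 (v1 - a) (v2 - a) (v3 - a) (x - a) d12 d13 d23 f1 f2 f3 with hQ | hQ | hQ
  · exact cut_lemma hgp T hK ha hv1h hv2h h3P hxP hA1 hA2 h12 h13.symm h23.symm hav3.symm
      hxa hx1 hx2 hQ
  · exact cut_lemma hgp T hK ha hv1h hv3h h2P hxP hA1 hA3 h13 h12.symm h23 hav2.symm
      hxa hx1 hx3 hQ
  · exact cut_lemma hgp T hK ha hv2h hv3h h1P hxP hA2 hA3 h23 h12 h13 hav1.symm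
      hxa hx2 hx3 hQ

end Aux4
section Aux5

lemma span_top {P : Finset Pt} (hgp : GenPos P) (hcard : 3 ≤ P.card) :
    affineSpan ℝ (P : Set Pt) = ⊤ := by
  by_contra hne
  obtain ⟨s, hs_sub, hs3⟩ := Finset.exists_subset_card_eq hcard
  obtain ⟨p, q, r, hpq, hpr, hqr, rfl⟩ := Finset.card_eq_three.mp hs3
  have hpP : p ∈ P := hs_sub (Finset.mem_insert_self p {q, r})
  have hqP : q ∈ P := hs_sub (Finset.mem_insert_of_mem (Finset.mem_insert_self q {r}))
  have hrP : r ∈ P := hs_sub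
    (Finset.mem_insert_of_mem (Finset.mem_insert_of_mem (Finset.mem_singleton_self r)))
  have hPne : ((affineSpan ℝ (P : Set Pt) : Set Pt)).Nonempty :=
    ⟨p, subset_affineSpan ℝ _ (Finset.mem_coe.mpr hpP)⟩
  have hdir : (affineSpan ℝ (P : Set Pt)).direction ≠ ⊤ := by
    intro h
    exact hne ((AffineSubspace.direction_eq_top_iff_of_nonempty hPne).mp h)
  have hlt : (affineSpan ℝ (P : Set Pt)).direction < ⊤ := lt_top_iff_ne_top.mpr hdir
  have hfr := Submodule.finrank_lt (K := ℝ) (V := Pt) hlt.ne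
  have hPt2 : Module.finrank ℝ Pt = 2 := by
    rw [Module.finrank_prod, Module.finrank_self]
  rw [hPt2] at hfr
  have hcol : Collinear ℝ (P : Set Pt) := by
    rw [collinear_iff_finrank_le_one, ← direction_affineSpan]
    exact Nat.lt_succ_iff.mp hfr
  have hsub : ({p, q, r} : Set Pt) ⊆ (P : Set Pt) := by
    intro z hz
    rcases hz with rfl | rfl | rfl
    · exact Finset.mem_coe.mpr hpP
    · exact Finset.mem_coe.mpr hqP
    · exact Finset.mem_coe.mpr hrP
  exact hgp p hpP q hqP r hrP hpq hpr hqr (hcol.subset hsub)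

lemma not_hull_interior {P : Finset Pt} (hgp : GenPos P) (hcard : 3 ≤ P.card)
    {p : Pt} (hp : p ∈ P) (hph : p ∉ hullVx P) :
    p ∈ interior (convexHull ℝ (P : Set Pt)) := by
  have hpK : p ∈ convexHull ℝ ((P.erase p : Finset Pt) : Set Pt) := by
    rw [hullVx, Finset.mem_filter] at hph
    push_neg at hph
    exact hph hp
  by_contra hint
  have hconv : Convex ℝ (convexHull ℝ (P : Set Pt)) := convex_convexHull ℝ _
  have hspan := span_top hgp hcard
  have hne : (interior (convexHull ℝ (P : Set Pt))).Nonempty := by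
    rw [Convex.interior_nonempty_iff_affineSpan_eq_top hconv, affineSpan_convexHull]
    exact hspan
  obtain ⟨x0, hx0⟩ := hne
  obtain ⟨f, hf⟩ := geometric_hahn_banach_open_point hconv.interior isOpen_interior hint
  have hx0p : f x0 < f p := hf x0 hx0
  have hmax : ∀ q ∈ convexHull ℝ (P : Set Pt), f q ≤ f p := by
    intro q hq
    by_contra hgt
    push_neg at hgt
    have hM : 0 < f q - f x0 := by linarith
    set ε : ℝ := (f q - f p) / (2 * (f q - f x0)) with hε
    have hε0 : 0 < ε := div_pos (by linarith) (by linarith)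
    have hε1 : ε < 1 := by
      rw [hε, div_lt_one (by linarith)]; linarith
    have hcombo := hconv.combo_interior_self_mem_interior hx0 hq hε0
      (by linarith : (0:ℝ) ≤ 1 - ε) (by ring)
    have hflt := hf _ hcombo
    rw [map_add, map_smul, map_smul, smul_eq_mul, smul_eq_mul] at hflt
    have hεM : ε * (f q - f x0) = (f q - f p) / 2 := by
      rw [hε]; field_simp
    nlinarith [hflt, hεM]
  rw [Finset.convexHull_eq] at hpK
  obtain ⟨w, hw0, hw1, hwc⟩ := hpK
  have hsum : ∑ q ∈ P.erase p, w q • q = p := by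
    have := Finset.centerMass_eq_of_sum_1 (P.erase p) id hw1
    rw [hwc] at this
    simpa [id] using this.symm
  have hfp : ∑ q ∈ P.erase p, w q * f q = f p := by
    have hcong := congrArg f hsum
    rw [map_sum] at hcong
    simpa [smul_eq_mul] using hcong
  have hsupp : ∀ q ∈ P.erase p, w q ≠ 0 → f q = f p := by
    intro q hq hwq
    by_contra hne'
    have hqhull : q ∈ convexHull ℝ (P : Set Pt) :=
      subset_convexHull ℝ _ (Finset.mem_coe.mpr (Finset.mem_of_mem_erase hq))
    have hqlt : f q < f p := lt_of_le_of_ne (hmax q hqhull) hne'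
    have hwqpos : 0 < w q := lt_of_le_of_ne (hw0 q hq) (Ne.symm hwq)
    have hlt : ∑ i ∈ P.erase p, w i * f i < ∑ i ∈ P.erase p, w i * f p := by
      apply Finset.sum_lt_sum
      · intro i hi
        exact mul_le_mul_of_nonneg_left
          (hmax i (subset_convexHull ℝ _ (Finset.mem_coe.mpr (Finset.mem_of_mem_erase hi))))
          (hw0 i hi)
      · exact ⟨q, hq, by nlinarith⟩
    rw [hfp, ← Finset.sum_mul, hw1, one_mul] at hlt
    exact lt_irrefl _ hlt
  set supp := (P.erase p).filter (fun q => w q ≠ 0) with hsupp_def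
  have hzero : ∀ q ∈ P.erase p, q ∉ supp → w q = 0 := by
    intro q hq hnq
    by_contra h'
    exact hnq (Finset.mem_filter.mpr ⟨hq, h'⟩)
  have hsum_supp : ∑ q ∈ supp, w q • q = p := by
    rw [← hsum]
    apply Finset.sum_subset (Finset.filter_subset _ _)
    intro q hq hnq
    rw [hzero q hq hnq, zero_smul]
  have hw1_supp : ∑ q ∈ supp, w q = 1 := by
    rw [← hw1]
    apply Finset.sum_subset (Finset.filter_subset _ _)
    intro q hq hnq
    exact hzero q hq hnq
  have hsupp_ne : supp.Nonempty := by
    by_contra h'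
    rw [Finset.not_nonempty_iff_eq_empty] at h'
    rw [h', Finset.sum_empty] at hw1_supp
    norm_num at hw1_supp
  by_cases hone : supp.card = 1
  · obtain ⟨q, hq_eq⟩ := Finset.card_eq_one.mp hone
    have hqs : q ∈ supp := by rw [hq_eq]; exact Finset.mem_singleton_self q
    have hqP : q ∈ P.erase p := (Finset.mem_filter.mp hqs).1
    rw [hq_eq, Finset.sum_singleton] at hsum_supp hw1_supp
    rw [hw1_supp, one_smul] at hsum_supp
    rw [hsum_supp] at hqP
    exact (Finset.mem_erase.mp hqP).1 rfl
  · have h2 : 1 < supp.card := by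
      have := hsupp_ne.card_pos
      omega
    obtain ⟨q1, hq1, q2, hq2, hq12⟩ := Finset.one_lt_card.mp h2
    have hq1P : q1 ∈ P.erase p := (Finset.mem_filter.mp hq1).1
    have hq2P : q2 ∈ P.erase p := (Finset.mem_filter.mp hq2).1
    have hfq1 : f q1 = f p := hsupp q1 hq1P (Finset.mem_filter.mp hq1).2
    have hfq2 : f q2 = f p := hsupp q2 hq2P (Finset.mem_filter.mp hq2).2
    have hq1p : q1 ≠ p := (Finset.mem_erase.mp hq1P).1
    have hq2p : q2 ≠ p := (Finset.mem_erase.mp hq2P).1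
    set c1 : ℝ := f (1, 0) with hc1
    set c2 : ℝ := f (0, 1) with hc2
    have hfeval : ∀ u : Pt, f u = u.1 * c1 + u.2 * c2 := by
      intro u
      have hu : u = u.1 • ((1:ℝ), (0:ℝ)) + u.2 • ((0:ℝ), (1:ℝ)) := by
        apply Prod.ext <;> simp
      calc f u = f (u.1 • ((1:ℝ), (0:ℝ)) + u.2 • ((0:ℝ), (1:ℝ))) := by rw [← hu]
        _ = u.1 * c1 + u.2 * c2 := by
            rw [map_add, map_smul, map_smul, smul_eq_mul, smul_eq_mul]
    have hfne : c1 ≠ 0 ∨ c2 ≠ 0 := by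
      by_contra hcc
      push_neg at hcc
      obtain ⟨e1, e2⟩ := hcc
      have hv1 := hfeval x0
      have hv2 := hfeval p
      rw [e1, e2] at hv1 hv2
      simp at hv1 hv2
      rw [hv1, hv2] at hx0p
      exact lt_irrefl _ hx0p
    set vdir : Pt := (-c2, c1) with hvdir
    have hvne : vdir ≠ 0 := by
      intro h
      have h1 : -c2 = 0 := congrArg Prod.fst h
      have h2 : c1 = 0 := congrArg Prod.snd h
      rcases hfne with h' | h'
      · exact h' h2
      · exact h' (by linarith)
    have hker : ∀ u : Pt, f u = f p → ∃ t : ℝ, u - p = t • vdir := by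
      intro u hu
      apply det2_eq_zero_imp vdir (u - p) hvne
      have hdd : det2 vdir (u - p) = -((u - p).1 * c1 + (u - p).2 * c2) := by
        simp only [det2, hvdir]; ring
      rw [hdd, ← hfeval (u - p), map_sub, hu]
      ring
    have hcol : Collinear ℝ ({p, q1, q2} : Set Pt) := by
      rw [collinear_iff_exists_forall_eq_smul_vadd]
      refine ⟨p, vdir, ?_⟩
      intro z hz
      rcases hz with rfl | rfl | rfl
      · exact ⟨0, by simp⟩
      · obtain ⟨t, ht⟩ := hker z hfq1
        exact ⟨t, by rw [vadd_eq_add, ← ht]; abel⟩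
      · obtain ⟨t, ht⟩ := hker z hfq2
        exact ⟨t, by rw [vadd_eq_add, ← ht]; abel⟩
    exact hgp p hp q1 (Finset.mem_of_mem_erase hq1P) q2 (Finset.mem_of_mem_erase hq2P)
      (Ne.symm hq1p) (Ne.symm hq2p) hq12 hcol

end Aux5
/-- Necessary Condition 1: if `P` admits a 4-connected
triangulation, then the number of interior points of `P` is at least the
number of hull vertices of `P`. -/
theorem necessary_condition_one (P : Finset Pt) (hgp : GenPos P)
    (h : ∃ T : Triangulation P, KConnected T.toPlaneGraph.graph 4) :
    (hullVx P).card ≤ (intPts P).card := by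
  obtain ⟨T, hK⟩ := h
  classical
  have hcard5 : 5 ≤ P.card := by
    have := hK.1; rwa [Fintype.card_coe] at this
  set H := hullVx P with hH
  have hHP : H ⊆ P := Finset.filter_subset _ _
  set I := P \ H with hI
  have hIP : I ⊆ P := Finset.sdiff_subset
  have hIint : I ⊆ intPts P := by
    intro u hu
    have huP : u ∈ P := hIP hu
    have hunh : u ∉ H := (Finset.mem_sdiff.mp hu).2
    rw [intPts, Finset.mem_filter]
    exact ⟨huP, not_hull_interior hgp (by omega) huP hunh⟩
  have hdeg : ∀ v ∈ H, 4 ≤ (P.filter (fun u => T.toPlaneGraph.Adj v u)).card :=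
    fun v hv => min_degree T hK (hHP hv)
  have hhub : ∀ v ∈ P, (H.filter (fun u => T.toPlaneGraph.Adj v u)).card ≤ 2 :=
    fun v hv => two_hull_nbrs hgp T hK hv
  have hsplit : ∀ v : Pt, (P.filter (fun u => T.toPlaneGraph.Adj v u)).card =
      (H.filter (fun u => T.toPlaneGraph.Adj v u)).card +
      (I.filter (fun u => T.toPlaneGraph.Adj v u)).card := by
    intro v
    rw [← Finset.card_union_of_disjoint
        (Finset.disjoint_filter_filter Finset.disjoint_sdiff),
      ← Finset.filter_union]
    congr 2
    exact (Finset.union_sdiff_of_subset hHP).symm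
  have hsum1 : 4 * H.card ≤ ∑ v ∈ H, (P.filter (fun u => T.toPlaneGraph.Adj v u)).card := by
    calc 4 * H.card = ∑ _v ∈ H, 4 := by rw [Finset.sum_const, smul_eq_mul, mul_comm]
      _ ≤ _ := Finset.sum_le_sum hdeg
  have hsum2 : ∑ v ∈ H, (H.filter (fun u => T.toPlaneGraph.Adj v u)).card ≤ 2 * H.card := by
    calc ∑ v ∈ H, (H.filter (fun u => T.toPlaneGraph.Adj v u)).card
        ≤ ∑ _v ∈ H, 2 := Finset.sum_le_sum (fun v hv => hhub v (hHP hv))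
      _ = 2 * H.card := by rw [Finset.sum_const, smul_eq_mul, mul_comm]
  have hswap : ∑ v ∈ H, (I.filter (fun u => T.toPlaneGraph.Adj v u)).card
      = ∑ u ∈ I, (H.filter (fun w => T.toPlaneGraph.Adj u w)).card := by
    calc ∑ v ∈ H, (I.filter (fun u => T.toPlaneGraph.Adj v u)).card
        = ∑ v ∈ H, ∑ u ∈ I, (if T.toPlaneGraph.Adj v u then 1 else 0) := by
          refine Finset.sum_congr rfl fun v _ => ?_
          exact Finset.card_filter _ _
      _ = ∑ u ∈ I, ∑ v ∈ H, (if T.toPlaneGraph.Adj v u then 1 else 0) := Finset.sum_comm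
      _ = ∑ u ∈ I, ∑ v ∈ H, (if T.toPlaneGraph.Adj u v then 1 else 0) := by
          refine Finset.sum_congr rfl fun u _ => Finset.sum_congr rfl fun v _ => ?_
          exact if_congr ⟨fun hh => T.toPlaneGraph.symm hh, fun hh => T.toPlaneGraph.symm hh⟩
            rfl rfl
      _ = ∑ u ∈ I, (H.filter (fun w => T.toPlaneGraph.Adj u w)).card := by
          refine Finset.sum_congr rfl fun u _ => ?_
          exact (Finset.card_filter _ _).symm
  have hsum3 : ∑ u ∈ I, (H.filter (fun w => T.toPlaneGraph.Adj u w)).card ≤ 2 * I.card := by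
    calc ∑ u ∈ I, (H.filter (fun w => T.toPlaneGraph.Adj u w)).card
        ≤ ∑ _u ∈ I, 2 := Finset.sum_le_sum (fun u hu => hhub u (hIP hu))
      _ = 2 * I.card := by rw [Finset.sum_const, smul_eq_mul, mul_comm]
  have htotal : ∑ v ∈ H, (P.filter (fun u => T.toPlaneGraph.Adj v u)).card =
      ∑ v ∈ H, (H.filter (fun u => T.toPlaneGraph.Adj v u)).card +
      ∑ v ∈ H, (I.filter (fun u => T.toPlaneGraph.Adj v u)).card := by
    rw [← Finset.sum_add_distrib]
    exact Finset.sum_congr rfl fun v _ => hsplit v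
  have hkey : 4 * H.card ≤ 2 * H.card + 2 * I.card := by
    have h1 := hsum1
    rw [htotal] at h1
    have h2 := hswap
    omega
  have hHI : H.card ≤ I.card := by omega
  exact le_trans hHI (Finset.card_le_card hIint)
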